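/- Let f_1, f_2 be continuous self-maps of the circle and suppose there exist maps h_1,...,h_k, T_1,...,T_s, S_1,...,S_r in the semigroup generated by f_1, f_2, an arc B, and an open set W ⊇ closure(B) such that: (a) every point of closure(B) is a limit of h_{i_1} ∘ ... ∘ h_{i_n}(y) for some sequence (i_j) uniformly in y ∈ B (so B is contained in the closure of every semigroup orbit of every point of B); (b) S^1 = ⋃_{i=1}^s T_i(B) = ⋃_{i=1}^r S_i^{-1}(B). Then the IFS generated by f_1, f_2 is forward minimal: every semigroup orbit is dense in S^1. -/

import Mathlib

open Set

/-- Composition of the two generators along a finite word. -/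
def listComp (f : Bool → AddCircle (1 : ℝ) → AddCircle (1 : ℝ)) (l : List Bool) :
    AddCircle (1 : ℝ) → AddCircle (1 : ℝ) :=
  fun x => l.foldl (fun y i => f i y) x

/-- Membership in the semigroup generated by `f true` and `f false`. -/
def InSemigroup (f : Bool → AddCircle (1 : ℝ) → AddCircle (1 : ℝ))
    (h : AddCircle (1 : ℝ) → AddCircle (1 : ℝ)) : Prop :=
  ∃ l : List Bool, l ≠ [] ∧ h = listComp f l


lemma listComp_append (f : Bool → AddCircle (1 : ℝ) → AddCircle (1 : ℝ)) (l1 l2 : List Bool) :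
    listComp f (l1 ++ l2) = fun x => listComp f l2 (listComp f l1 x) := by
  funext x
  simp [listComp, List.foldl_append]

lemma inSemigroup_comp (f : Bool → AddCircle (1 : ℝ) → AddCircle (1 : ℝ))
    {g h : AddCircle (1 : ℝ) → AddCircle (1 : ℝ)}
    (hg : InSemigroup f g) (hh : InSemigroup f h) :
    InSemigroup f (fun x => g (h x)) := by
  obtain ⟨l1, hl1, rfl⟩ := hh
  obtain ⟨l2, hl2, rfl⟩ := hg
  exact ⟨l1 ++ l2, by simp [hl1], (listComp_append f l1 l2).symm⟩

lemma listComp_continuous (f : Bool → AddCircle (1 : ℝ) → AddCircle (1 : ℝ))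
    (hf : ∀ i, Continuous (f i)) (l : List Bool) : Continuous (listComp f l) := by
  induction l with
  | nil => exact continuous_id
  | cons i l ih =>
      have : listComp f (i :: l) = fun x => listComp f l (f i x) := by
        funext x; simp [listComp]
      rw [this]
      exact ih.comp (hf i)

theorem minimality_from_local_density_and_cover
    (f : Bool → AddCircle (1 : ℝ) → AddCircle (1 : ℝ))
    (hf : ∀ i, Continuous (f i))
    (B W : Set (AddCircle (1 : ℝ)))
    (hBopen : IsOpen B) (hBne : B.Nonempty) (hWopen : IsOpen W) (hBW : closure B ⊆ W)
    -- (a) orbits of points of `B` are dense in `B`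
    (ha : ∀ x ∈ B, B ⊆ closure {y | ∃ h, InSemigroup f h ∧ y = h x})
    -- (b) finitely many images and preimages of `B` by semigroup elements cover the circle
    (hb : ∃ (s r : ℕ) (T : Fin s → AddCircle (1 : ℝ) → AddCircle (1 : ℝ))
        (S : Fin r → AddCircle (1 : ℝ) → AddCircle (1 : ℝ)),
      (∀ i, InSemigroup f (T i)) ∧ (∀ i, InSemigroup f (S i)) ∧
      (∀ i, Function.Bijective (S i)) ∧
      (Set.univ : Set (AddCircle (1 : ℝ))) = ⋃ i : Fin s, T i '' B ∧
      (Set.univ : Set (AddCircle (1 : ℝ))) = ⋃ i : Fin r, S i ⁻¹' B) :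
    ∀ x : AddCircle (1 : ℝ), ∀ I : Set (AddCircle (1 : ℝ)), IsOpen I → I.Nonempty →
      ∃ h, InSemigroup f h ∧ h x ∈ I := by
  intro x I hIopen hIne
  obtain ⟨s, r, T, S, hT, hS, _hSbij, hTcov, hScov⟩ := hb
  -- x lies in some S i ⁻¹' B
  have hx : x ∈ ⋃ i : Fin r, S i ⁻¹' B := by rw [← hScov]; trivial
  obtain ⟨_, ⟨i, rfl⟩, hxi⟩ := hx
  -- pick z ∈ I, z = T j b with b ∈ B
  obtain ⟨z, hz⟩ := hIne
  have hz' : z ∈ ⋃ j : Fin s, T j '' B := by rw [← hTcov]; trivial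
  obtain ⟨_, ⟨j, rfl⟩, b, hbB, hbz⟩ := hz'
  -- continuity of T j
  obtain ⟨lT, hlT, hTl⟩ := hT j
  have hTcont : Continuous (T j) := by rw [hTl]; exact listComp_continuous f hf lT
  have hUopen : IsOpen (T j ⁻¹' I) := hTcont.isOpen_preimage I hIopen
  have hbU : b ∈ T j ⁻¹' I := by simp [Set.mem_preimage, hbz, hz]
  -- b is in closure of orbit of S i x
  have hdense := ha (S i x) hxi hbB
  rw [mem_closure_iff] at hdense
  obtain ⟨y, hyU, h', hh', rfl⟩ := hdense (T j ⁻¹' I) hUopen hbU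
  refine ⟨fun t => T j (h' (S i t)), ?_, hyU⟩
  exact inSemigroup_comp f (hT j) (inSemigroup_comp f hh' (hS i))
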